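/- The class of regular languages is strictly contained in PostS: every regular language over Σ belongs to PostS, and the nonregular language L_eq over the alphabet {a,b} belongs to PostS. -/

import Mathlib

noncomputable section

/-- The input alphabet extended with the two endmarkers `¢` and `$`. -/
inductive ESym (α : Type) : Type where
  | cent : ESym α
  | dollar : ESym α
  | letter : α → ESym α

/-- The state distribution obtained by applying, in order, the matrices for
`¢`, the letters of `w`, and `$` to the standard basis vector at the initial state `0`. -/
def pRun {α : Type} {n : ℕ} (A : ESym α → Matrix (Fin (n + 1)) (Fin (n + 1)) ℝ)
    (w : List α) : Fin (n + 1) → ℝ :=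
  (ESym.cent :: (w.map ESym.letter ++ [ESym.dollar])).foldl
    (fun v σ => (A σ).mulVec v) (Pi.single 0 1)

/-- A real-time probabilistic finite automaton with postselection (RT-PostPFA). -/
structure PostPFA (α : Type) where
  n : ℕ
  A : ESym α → Matrix (Fin (n + 1)) (Fin (n + 1)) ℝ
  nonneg : ∀ σ i j, 0 ≤ A σ i j
  colSum : ∀ σ j, ∑ i, A σ i j = 1
  Qpa : Finset (Fin (n + 1))
  Qpr : Finset (Fin (n + 1))
  disj : Disjoint Qpa Qpr
  postPos : ∀ w : List α,
    0 < (∑ i ∈ Qpa, pRun A w i) + (∑ i ∈ Qpr, pRun A w i)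

/-- Acceptance probability before postselection. -/
def PostPFA.pacc {α : Type} (M : PostPFA α) (w : List α) : ℝ :=
  ∑ i ∈ M.Qpa, pRun M.A w i

/-- Rejection probability before postselection. -/
def PostPFA.prej {α : Type} (M : PostPFA α) (w : List α) : ℝ :=
  ∑ i ∈ M.Qpr, pRun M.A w i

/-- Normalized acceptance probability of an RT-PostPFA. -/
def PostPFA.fa {α : Type} (M : PostPFA α) (w : List α) : ℝ :=
  M.pacc w / (M.pacc w + M.prej w)

/-- Recognition of a language with error bound `ε`. -/
def PostPFA.Recognizes {α : Type} (M : PostPFA α) (L : Set (List α)) (ε : ℝ) : Prop :=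
  ∀ w : List α, (w ∈ L → 1 - ε ≤ M.fa w) ∧ (w ∉ L → M.fa w ≤ ε)

/-- The class of languages recognized by RT-PostPFAs with bounded error. -/
def PostS {α : Type} (L : Set (List α)) : Prop :=
  ∃ (M : PostPFA α) (ε : ℝ), 0 ≤ ε ∧ ε < 1 / 2 ∧ M.Recognizes L ε

/-- Recognition with zero error: `fa = 1` on members, `fa = 0` on non-members. -/
def PostPFA.RecognizesZero {α : Type} (M : PostPFA α) (L : Set (List α)) : Prop :=
  ∀ w : List α, (w ∈ L → M.fa w = 1) ∧ (w ∉ L → M.fa w = 0)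

/-- The class of languages recognized by RT-PostPFAs with zero error. -/
def ZPostS {α : Type} (L : Set (List α)) : Prop :=
  ∃ M : PostPFA α, M.RecognizesZero L

/-- The two-letter alphabet `{a, b}`. -/
inductive TwoSym : Type where
  | a : TwoSym
  | b : TwoSym
deriving DecidableEq

instance : Fintype TwoSym :=
  ⟨⟨{TwoSym.a, TwoSym.b}, by simp⟩, fun x => by cases x <;> simp⟩

/-- The language of words with equally many `a`s and `b`s. -/
def Leq : Set (List TwoSym) := {w | w.count TwoSym.a = w.count TwoSym.b}

/-- The language of palindromes over `{a, b}`. -/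
def Lpal : Set (List TwoSym) := {w | w.reverse = w}


noncomputable def detMat {m : ℕ} (f : Fin m → Fin m) : Matrix (Fin m) (Fin m) ℝ :=
  fun i j => if i = f j then 1 else 0

lemma detMat_mulVec {m : ℕ} (f : Fin m → Fin m) (j : Fin m) :
    (detMat f).mulVec (Pi.single j 1) = Pi.single (f j) 1 := by
  funext i
  simp [Matrix.mulVec, dotProduct, detMat, Pi.single_apply]

lemma foldl_detMat {β : Type*} {m : ℕ} (f : β → Fin m → Fin m) (l : List β) (j : Fin m) :
    l.foldl (fun v σ => (detMat (f σ)).mulVec v) (Pi.single j 1)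
      = Pi.single (l.foldl (fun s σ => f σ s) j) 1 := by
  induction l generalizing j with
  | nil => rfl
  | cons a l ih => rw [List.foldl_cons, detMat_mulVec, ih, List.foldl_cons]

open Classical in
theorem reg_posts {α : Type} (L : Set (List α)) (h : Language.IsRegular L) : PostS L := by
  obtain ⟨σ, _, M, hM⟩ := h
  have hne : Nonempty σ := ⟨M.start⟩
  have hcard : 0 < Fintype.card σ := Fintype.card_pos
  set n : ℕ := Fintype.card σ - 1 with hn
  have e : σ ≃ Fin (n + 1) := Fintype.equivFinOfCardEq (by omega)
  -- the step function for each symbol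
  set f : ESym α → Fin (n + 1) → Fin (n + 1) := fun τ =>
    match τ with
    | ESym.cent => fun _ => e M.start
    | ESym.dollar => id
    | ESym.letter a => fun s => e (M.step (e.symm s) a) with hf
  have detnn : ∀ {m : ℕ} (g : Fin m → Fin m) (i j : Fin m), 0 ≤ detMat g i j := by
    intro m g i j
    by_cases h : i = g j <;> simp [detMat, h]
  have hrun : ∀ w : List α, pRun (fun τ => detMat (f τ)) w = Pi.single (e (M.eval w)) 1 := by
    intro w
    have h1 : pRun (fun τ => detMat (f τ)) w =
        Pi.single ((ESym.cent :: (w.map ESym.letter ++ [ESym.dollar])).foldl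
          (fun s τ => f τ s) 0) 1 := foldl_detMat f _ 0
    have key : ∀ (u : List α) (s : σ),
        List.foldl (fun s τ => f τ s) (e s) (u.map ESym.letter) = e (List.foldl M.step s u) := by
      intro u
      induction u with
      | nil => intro s; rfl
      | cons a u ih => intro s; simp only [List.map_cons, List.foldl_cons, hf]; rw [e.symm_apply_apply]; exact ih _
    rw [h1, List.foldl_cons, List.foldl_append]
    have h2 : ∀ x, List.foldl (fun s τ => f τ s) x [ESym.dollar] = x := fun x => rfl
    have h3 : f ESym.cent 0 = e M.start := rfl
    rw [h2, h3, key]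
    rfl
  refine ⟨⟨n, fun τ => detMat (f τ), ?_, ?_,
    Finset.univ.filter (fun i => e.symm i ∈ M.accept),
    Finset.univ.filter (fun i => e.symm i ∉ M.accept), ?_, ?_⟩, 0, le_refl _, by norm_num, ?_⟩
  · intro τ i j; exact detnn _ i j
  · intro τ j; simp [detMat]
  · simp [Finset.disjoint_filter]
  · intro w
    rw [hrun]
    simp only [Pi.single_apply, Finset.sum_ite_eq', Finset.mem_filter, Finset.mem_univ, true_and]
    split <;> norm_num
  · intro w
    have hacc : (w ∈ L) ↔ M.eval w ∈ M.accept := by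
      rw [← hM]; rfl
    have hpa : (∑ i ∈ Finset.univ.filter (fun i => e.symm i ∈ M.accept),
        pRun (fun τ => detMat (f τ)) w i) = if M.eval w ∈ M.accept then 1 else 0 := by
      rw [hrun]
      simp [Pi.single_apply, Finset.sum_ite_eq']
    have hpr : (∑ i ∈ Finset.univ.filter (fun i => e.symm i ∉ M.accept),
        pRun (fun τ => detMat (f τ)) w i) = if M.eval w ∈ M.accept then 0 else 1 := by
      rw [hrun]
      simp [Pi.single_apply, Finset.sum_ite_eq']
    constructor
    · intro hw
      rw [hacc] at hw
      simp only [PostPFA.fa, PostPFA.pacc, PostPFA.prej, hpa, hpr, if_pos hw]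
      norm_num
    · intro hw
      rw [hacc] at hw
      simp only [PostPFA.fa, PostPFA.pacc, PostPFA.prej, hpa, hpr, if_neg hw]
      norm_num

def v7 (a0 a1 a2 a3 a4 a5 a6 : ℝ) : Fin 7 → ℝ := fun i =>
  if i = 0 then a0 else if i = 1 then a1 else if i = 2 then a2 else if i = 3 then a3
  else if i = 4 then a4 else if i = 5 then a5 else a6

def colM (c0 c1 c2 c3 c4 c5 c6 : Fin 7 → ℝ) : Matrix (Fin 7) (Fin 7) ℝ :=
  fun i j => v7 (c0 i) (c1 i) (c2 i) (c3 i) (c4 i) (c5 i) (c6 i) j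

def junk : Fin 7 → ℝ := v7 0 0 0 0 1 0 0

def LA : ESym TwoSym → Matrix (Fin 7) (Fin 7) ℝ
  | ESym.cent => colM (v7 0 (3/5) (1/5) (1/5) 0 0 0) junk junk junk junk junk junk
  | ESym.letter TwoSym.a =>
      colM junk (v7 0 (1/4) 0 0 (3/4) 0 0) (v7 0 0 (1/16) 0 (15/16) 0 0) (v7 0 0 0 1 0 0 0) junk junk junk
  | ESym.letter TwoSym.b =>
      colM junk (v7 0 (1/4) 0 0 (3/4) 0 0) (v7 0 0 1 0 0 0 0) (v7 0 0 0 (1/16) (15/16) 0 0) junk junk junk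
  | ESym.dollar =>
      colM junk (v7 0 0 0 0 0 1 0) (v7 0 0 0 0 0 0 1) (v7 0 0 0 0 0 0 1) junk junk junk

lemma v7_nonneg {a0 a1 a2 a3 a4 a5 a6 : ℝ} (h0 : 0 ≤ a0) (h1 : 0 ≤ a1) (h2 : 0 ≤ a2)
    (h3 : 0 ≤ a3) (h4 : 0 ≤ a4) (h5 : 0 ≤ a5) (h6 : 0 ≤ a6) (i : Fin 7) :
    0 ≤ v7 a0 a1 a2 a3 a4 a5 a6 i := by
  unfold v7; split_ifs <;> assumption

lemma v7_sum (a0 a1 a2 a3 a4 a5 a6 : ℝ) :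
    ∑ i, v7 a0 a1 a2 a3 a4 a5 a6 i = a0+a1+a2+a3+a4+a5+a6 := by
  simp [Fin.sum_univ_seven, v7]

lemma v7_one (j : Fin 7) : v7 1 1 1 1 1 1 1 j = 1 := by
  unfold v7; split_ifs <;> rfl

lemma sum_colM (c0 c1 c2 c3 c4 c5 c6 : Fin 7 → ℝ) (j : Fin 7) :
    ∑ i, colM c0 c1 c2 c3 c4 c5 c6 i j
      = v7 (∑ i, c0 i) (∑ i, c1 i) (∑ i, c2 i) (∑ i, c3 i) (∑ i, c4 i) (∑ i, c5 i)
          (∑ i, c6 i) j := by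
  by_cases h0 : j = 0
  · simp [colM, v7, h0]
  by_cases h1 : j = 1
  · simp [colM, v7, h0, h1]
  by_cases h2 : j = 2
  · simp [colM, v7, h0, h1, h2]
  by_cases h3 : j = 3
  · simp [colM, v7, h0, h1, h2, h3]
  by_cases h4 : j = 4
  · simp [colM, v7, h0, h1, h2, h3, h4]
  by_cases h5 : j = 5
  · simp [colM, v7, h0, h1, h2, h3, h4, h5]
  simp [colM, v7, h0, h1, h2, h3, h4, h5]

lemma LA_nonneg : ∀ σ i j, 0 ≤ LA σ i j := by
  rintro (_ | _ | (_ | _)) i j <;>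
    · show 0 ≤ colM _ _ _ _ _ _ _ i j
      unfold colM junk
      apply v7_nonneg <;> apply v7_nonneg <;> norm_num

lemma LA_colSum : ∀ σ j, ∑ i, LA σ i j = 1 := by
  rintro (_ | _ | (_ | _)) j <;>
    · show ∑ i, colM _ _ _ _ _ _ _ i j = 1
      rw [sum_colM]
      norm_num [junk, v7_sum, v7_one]

lemma mulVec_cent : (LA ESym.cent).mulVec (Pi.single 0 1) = v7 0 (3/5) (1/5) (1/5) 0 0 0 := by
  funext i
  fin_cases i <;>
    simp [LA, colM, v7, junk, Matrix.mulVec, dotProduct, Fin.sum_univ_seven,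
      Pi.single_apply] <;> ring

lemma mulVec_a (g x y j : ℝ) : (LA (ESym.letter TwoSym.a)).mulVec (v7 0 g x y j 0 0) =
    v7 0 (1/4*g) (1/16*x) y (3/4*g + 15/16*x + j) 0 0 := by
  funext i
  fin_cases i <;>
    simp [LA, colM, v7, junk, Matrix.mulVec, dotProduct, Fin.sum_univ_seven] <;> ring

lemma mulVec_b (g x y j : ℝ) : (LA (ESym.letter TwoSym.b)).mulVec (v7 0 g x y j 0 0) =
    v7 0 (1/4*g) x (1/16*y) (3/4*g + 15/16*y + j) 0 0 := by
  funext i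
  fin_cases i <;>
    simp [LA, colM, v7, junk, Matrix.mulVec, dotProduct, Fin.sum_univ_seven] <;> ring

lemma mulVec_d (g x y j : ℝ) : (LA ESym.dollar).mulVec (v7 0 g x y j 0 0) =
    v7 0 0 0 0 j g (x+y) := by
  funext i
  fin_cases i <;>
    simp [LA, colM, v7, junk, Matrix.mulVec, dotProduct, Fin.sum_univ_seven] <;> ring

lemma run_inv (u : List TwoSym) : ∃ j : ℝ,
    (ESym.cent :: u.map ESym.letter).foldl (fun v σ => (LA σ).mulVec v) (Pi.single 0 1)
      = v7 0 (3/5 * (1/4)^u.length) (1/5 * (1/16)^(u.count TwoSym.a))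
          (1/5 * (1/16)^(u.count TwoSym.b)) j 0 0 := by
  induction u using List.reverseRec with
  | nil =>
      refine ⟨0, ?_⟩
      simpa using mulVec_cent
  | append_singleton u c ih =>
      obtain ⟨j, hj⟩ := ih
      rw [List.map_append, ← List.cons_append, List.foldl_append, hj]
      simp only [List.map_cons, List.map_nil, List.foldl_cons, List.foldl_nil]
      rcases c with _ | _
      · refine ⟨3/4*(3/5 * (1/4)^u.length) + 15/16*(1/5 * (1/16)^(u.count TwoSym.a)) + j, ?_⟩
        rw [mulVec_a]
        have h1 : (u ++ [TwoSym.a]).length = u.length + 1 := by simp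
        have h2 : (u ++ [TwoSym.a]).count TwoSym.a = u.count TwoSym.a + 1 := by
          simp [List.count_append]
        have h3 : (u ++ [TwoSym.a]).count TwoSym.b = u.count TwoSym.b := by
          simp [List.count_append]
        rw [h1, h2, h3]
        have e1 : 1/4*(3/5 * (1/4:ℝ)^u.length) = 3/5 * (1/4)^(u.length+1) := by
          rw [pow_succ]; ring
        have e2 : 1/16*(1/5 * (1/16:ℝ)^(u.count TwoSym.a)) =
            1/5 * (1/16)^(u.count TwoSym.a+1) := by rw [pow_succ]; ring
        rw [e1, e2]
      · refine ⟨3/4*(3/5 * (1/4)^u.length) + 15/16*(1/5 * (1/16)^(u.count TwoSym.b)) + j, ?_⟩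
        rw [mulVec_b]
        have h1 : (u ++ [TwoSym.b]).length = u.length + 1 := by simp
        have h2 : (u ++ [TwoSym.b]).count TwoSym.a = u.count TwoSym.a := by
          simp [List.count_append]
        have h3 : (u ++ [TwoSym.b]).count TwoSym.b = u.count TwoSym.b + 1 := by
          simp [List.count_append]
        rw [h1, h2, h3]
        have e1 : 1/4*(3/5 * (1/4:ℝ)^u.length) = 3/5 * (1/4)^(u.length+1) := by
          rw [pow_succ]; ring
        have e2 : 1/16*(1/5 * (1/16:ℝ)^(u.count TwoSym.b)) =
            1/5 * (1/16)^(u.count TwoSym.b+1) := by rw [pow_succ]; ring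
        rw [e1, e2]

lemma pRun_eq (w : List TwoSym) : ∃ j : ℝ,
    pRun LA w = v7 0 0 0 0 j (3/5 * (1/4)^w.length)
      (1/5 * (1/16)^(w.count TwoSym.a) + 1/5 * (1/16)^(w.count TwoSym.b)) := by
  obtain ⟨j, hj⟩ := run_inv w
  refine ⟨j, ?_⟩
  unfold pRun
  rw [← List.cons_append, List.foldl_append, hj]
  simp only [List.foldl_cons, List.foldl_nil]
  exact mulVec_d _ _ _ _

-- arithmetic key lemma and final pieces appended to t5 content
lemma count_len (w : List TwoSym) : w.count TwoSym.a + w.count TwoSym.b = w.length := by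
  induction w with
  | nil => rfl
  | cons c w ih => rcases c <;> simp [List.count_cons] <;> omega

lemma aux_key (d k : ℕ) (hd : 1 ≤ d) :
    17 * (1/4:ℝ)^(2*k+d) ≤ 4*((1/16)^(k+d) + (1/16)^k) := by
  have h216 : (1/16:ℝ) = (1/4)^2 := by norm_num
  have ht : (1/4:ℝ)^d ≤ 1/4 := by
    calc (1/4:ℝ)^d ≤ (1/4)^1 := pow_le_pow_of_le_one (by norm_num) (by norm_num) hd
    _ = 1/4 := pow_one _
  have ht0 : (0:ℝ) < (1/4)^d := by positivity
  have h16 : (1/16:ℝ)^d = ((1/4)^d)^2 := by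
    rw [h216, ← pow_mul, mul_comm, pow_mul]
  have hk0 : (0:ℝ) ≤ (1/16)^k := by positivity
  have hmain : 17 * (1/4:ℝ)^d ≤ 4*((1/16)^d + 1) := by
    rw [h16]; nlinarith [ht, ht0]
  have e1 : (1/4:ℝ)^(2*k) = (1/16)^k := by
    rw [h216, ← pow_mul, mul_comm]
  calc 17 * (1/4:ℝ)^(2*k+d) = (1/16)^k * (17 * (1/4)^d) := by
        rw [pow_add, e1]; ring
    _ ≤ (1/16)^k * (4*((1/16)^d + 1)) := by
        exact mul_le_mul_of_nonneg_left hmain hk0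
    _ = 4*((1/16)^(k+d) + (1/16)^k) := by rw [pow_add]; ring

lemma key_ineq (m k : ℕ) (h : m ≠ k) :
    17 * (1/4:ℝ)^(m+k) ≤ 4 * ((1/16)^m + (1/16)^k) := by
  rcases lt_or_gt_of_ne h with hlt | hgt
  · obtain ⟨d, hd, rfl⟩ : ∃ d, 1 ≤ d ∧ k = m + d := ⟨k - m, by omega, by omega⟩
    have h1 := aux_key d m hd
    have e : m + (m + d) = 2*m + d := by ring
    rw [e]; linarith
  · obtain ⟨d, hd, rfl⟩ : ∃ d, 1 ≤ d ∧ m = k + d := ⟨m - k, by omega, by omega⟩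
    have h1 := aux_key d k hd
    have e : k + d + k = 2*k + d := by ring
    rw [e]; linarith

lemma posts_Leq : PostS Leq := by
  have hpp : ∀ w : List TwoSym,
      0 < (∑ i ∈ ({5} : Finset (Fin 7)), pRun LA w i) +
        (∑ i ∈ ({6} : Finset (Fin 7)), pRun LA w i) := by
    intro w
    obtain ⟨j, hw⟩ := pRun_eq w
    rw [Finset.sum_singleton, Finset.sum_singleton, hw]
    have h5 : v7 0 0 0 0 j (3/5 * (1/4)^w.length)
        (1/5 * (1/16)^(w.count TwoSym.a) + 1/5 * (1/16)^(w.count TwoSym.b)) 5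
        = 3/5 * (1/4)^w.length := by simp [v7]
    have h6 : v7 0 0 0 0 j (3/5 * (1/4)^w.length)
        (1/5 * (1/16)^(w.count TwoSym.a) + 1/5 * (1/16)^(w.count TwoSym.b)) 6
        = 1/5 * (1/16)^(w.count TwoSym.a) + 1/5 * (1/16)^(w.count TwoSym.b) := by simp [v7]
    rw [h5, h6]
    positivity
  refine ⟨⟨6, LA, LA_nonneg, LA_colSum, {5}, {6}, by decide, hpp⟩, 12/29,
    by norm_num, by norm_num, ?_⟩
  intro w
  set M : PostPFA TwoSym := ⟨6, LA, LA_nonneg, LA_colSum, {5}, {6}, by decide, hpp⟩ with hMdef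
  obtain ⟨j, hw⟩ := pRun_eq w
  set m := w.count TwoSym.a with hm
  set k := w.count TwoSym.b with hk
  have hlen : w.length = m + k := (count_len w).symm
  have hpacc : M.pacc w = 3/5 * (1/4)^(m+k) := by
    show ∑ i ∈ ({5} : Finset (Fin 7)), pRun LA w i = _
    rw [Finset.sum_singleton, hw, hlen]
    simp [v7]
  have hprej : M.prej w = 1/5 * (1/16)^m + 1/5 * (1/16)^k := by
    show ∑ i ∈ ({6} : Finset (Fin 7)), pRun LA w i = _
    rw [Finset.sum_singleton, hw]
    simp [v7]
  have hg0 : (0:ℝ) < 3/5 * (1/4)^(m+k) := by positivity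
  have hr0 : (0:ℝ) ≤ 1/5 * (1/16)^m + 1/5 * (1/16)^k := by positivity
  constructor
  · intro hwL
    have hmk : m = k := hwL
    have h1616 : ((1/4:ℝ))^(m+k) = (1/16)^k := by
      rw [hmk, show ((1/16:ℝ)) = (1/4)^2 by norm_num, ← pow_mul]
      congr 1; ring
    have hfa : M.fa w = 3/5 := by
      unfold PostPFA.fa
      rw [hpacc, hprej, h1616, hmk]
      have ht : (0:ℝ) < (1/16:ℝ)^k := by positivity
      rw [div_eq_iff (by positivity)]
      ring
    rw [hfa]; norm_num
  · intro hwL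
    have hmk : m ≠ k := hwL
    have hkey := key_ineq m k hmk
    unfold PostPFA.fa
    rw [hpacc, hprej]
    rw [div_le_iff₀ (by positivity)]
    nlinarith [hkey]

lemma Leq_not_regular : ¬ Language.IsRegular Leq := by
  rintro ⟨σ, hσ, M, hM⟩
  set n := Fintype.card σ with hn
  set x : List TwoSym := List.replicate n TwoSym.a ++ List.replicate n TwoSym.b with hxdef
  have hxL : x ∈ Leq := by
    simp [Leq, hxdef, List.count_append, List.count_replicate]
  have hw : x ∈ M.accepts := by rw [hM]; exact hxL
  have hlen : n ≤ x.length := by simp [hxdef]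
  obtain ⟨p, q, r, hx, hpq, hqne, hsub⟩ := M.pumping_lemma hw hlen
  have hmem : p ++ (q ++ q) ++ r ∈ M.accepts := by
    apply hsub
    refine ⟨p ++ (q ++ q), ⟨p, rfl, q ++ q, ?_, rfl⟩, r, rfl, rfl⟩
    refine Language.mem_kstar.mpr ?_
    refine ⟨[q, q], by simp, ?_⟩
    intro y hy
    simp only [List.mem_cons, List.not_mem_nil, or_false] at hy
    rcases hy with h | h <;> exact h ▸ rfl
  have hmem' : p ++ (q ++ q) ++ r ∈ Leq := by rw [← hM]; exact hmem
  have hq_b : q.count TwoSym.b = 0 := by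
    have h1 : (p ++ q ++ r).take (p.length + q.length) = p ++ q := by
      rw [← @List.length_append _ p q, List.take_left]
    have h2 : x.take (p.length + q.length) = List.replicate (p.length + q.length) TwoSym.a := by
      rw [hxdef, List.take_append_of_le_length (by simpa using hpq), List.take_replicate,
        min_eq_left (by simpa using hpq)]
    have h3 : p ++ q = List.replicate (p.length + q.length) TwoSym.a := by
      rw [← h1, ← hx, h2]
    have h4 : (p ++ q).count TwoSym.b = 0 := by
      rw [h3]; simp [List.count_replicate]
    rw [List.count_append] at h4
    omega
  have hxL' : p ++ q ++ r ∈ Leq := by rw [← hx]; exact hxL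
  have e1 : p.count TwoSym.a + q.count TwoSym.a + r.count TwoSym.a
      = p.count TwoSym.b + q.count TwoSym.b + r.count TwoSym.b := by
    have := hxL'
    simp only [Leq, Set.mem_setOf_eq, List.count_append] at this
    omega
  have e2 : p.count TwoSym.a + 2*q.count TwoSym.a + r.count TwoSym.a
      = p.count TwoSym.b + 2*q.count TwoSym.b + r.count TwoSym.b := by
    have := hmem'
    simp only [Leq, Set.mem_setOf_eq, List.count_append] at this
    omega
  have hq_a : q.count TwoSym.a = 0 := by omega
  have : q.length = 0 := by
    have := count_len q
    omega
  exact hqne (List.eq_nil_of_length_eq_zero this)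

/-- Regular languages are strictly contained in `PostS`: every regular language is
in `PostS`, and the nonregular language `L_eq` is in `PostS`. -/
theorem REG_ssubset_PostS :
    (∀ (α : Type) [Fintype α] (L : Set (List α)), Language.IsRegular L → PostS L) ∧
      PostS Leq ∧ ¬ Language.IsRegular Leq := by
  exact ⟨fun α _ L h => reg_posts L h, posts_Leq, Leq_not_regular⟩
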